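/- For every natural number n, 2·(2n − 1) · ∑_{0 ≤ i ≤ n, i even} i · C(2n, n−i) = C(2n, n) · (n² − n), as an identity of integers. -/
import Mathlib

open Finset

private lemma key_choose (N j : ℕ) (h : j ≤ N) :
    ((j:ℤ)+1) * (Nat.choose N (j+1)) = ((N:ℤ) - j) * Nat.choose N j := by
  have h1 := Nat.choose_succ_right_eq N j
  have h2 : ((N - j : ℕ) : ℤ) = (N:ℤ) - j := by
    push_cast [Nat.cast_sub h]; ring
  have h3 : (Nat.choose N (j+1) : ℤ) * ((j:ℤ)+1)
      = (Nat.choose N j : ℤ) * ((N:ℤ) - j) := by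
    rw [← h2]; exact_mod_cast congrArg (Nat.cast : ℕ → ℤ) h1
  linarith [h3]

private lemma sumA (n : ℕ) :
    ∑ j ∈ Finset.range (n+1), 2 * ((n:ℤ) - j) * (Nat.choose (2*n) j : ℤ)
      = (n:ℤ) * (Nat.choose (2*n) n : ℤ) := by
  have tel := Finset.sum_range_sub (fun j => (j:ℤ) * (Nat.choose (2*n) j : ℤ)) (n+1)
  have hpt : ∀ j ∈ Finset.range (n+1),
      ((j:ℤ)+1) * (Nat.choose (2*n) (j+1) : ℤ) - (j:ℤ) * (Nat.choose (2*n) j : ℤ)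
        = 2 * ((n:ℤ) - j) * (Nat.choose (2*n) j : ℤ) := by
    intro j hj
    have hj' : j ≤ 2*n := by have := Finset.mem_range.mp hj; omega
    have hk := key_choose (2*n) j hj'
    push_cast at hk ⊢
    linear_combination hk
  have hend := key_choose (2*n) n (by omega)
  calc ∑ j ∈ Finset.range (n+1), 2 * ((n:ℤ) - j) * (Nat.choose (2*n) j : ℤ)
      = ∑ j ∈ Finset.range (n+1),
          (((j:ℤ)+1) * (Nat.choose (2*n) (j+1) : ℤ) - (j:ℤ) * (Nat.choose (2*n) j : ℤ)) :=
        (Finset.sum_congr rfl hpt).symm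
    _ = ((n:ℤ)+1) * (Nat.choose (2*n) (n+1) : ℤ) - 0 := by
        have := tel; push_cast at this ⊢; linear_combination this
    _ = (n:ℤ) * (Nat.choose (2*n) n : ℤ) := by
        push_cast at hend ⊢; linear_combination hend

private lemma sumB (n : ℕ) :
    ∑ j ∈ Finset.range (n+1),
        2 * (2*(n:ℤ) - 1) * (-1:ℤ)^j * ((n:ℤ) - j) * (Nat.choose (2*n) j : ℤ)
      = (-1:ℤ)^(n+1) * (n:ℤ) * (Nat.choose (2*n) n : ℤ) := by
  have tel := Finset.sum_range_sub
    (fun j => (-1:ℤ)^j * (j:ℤ) * (2*(j:ℤ) - 2*(n:ℤ) - 1) * (Nat.choose (2*n) j : ℤ)) (n+1)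
  have hpt : ∀ j ∈ Finset.range (n+1),
      ((-1:ℤ)^(j+1) * ((j:ℤ)+1) * (2*((j:ℤ)+1) - 2*(n:ℤ) - 1) * (Nat.choose (2*n) (j+1) : ℤ)
        - (-1:ℤ)^j * (j:ℤ) * (2*(j:ℤ) - 2*(n:ℤ) - 1) * (Nat.choose (2*n) j : ℤ))
      = 2 * (2*(n:ℤ) - 1) * (-1:ℤ)^j * ((n:ℤ) - j) * (Nat.choose (2*n) j : ℤ) := by
    intro j hj
    have hj' : j ≤ 2*n := by have := Finset.mem_range.mp hj; omega
    have hk := key_choose (2*n) j hj'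
    have hpow : (-1:ℤ)^(j+1) = -(-1:ℤ)^j := by rw [pow_succ]; ring
    rw [hpow]
    push_cast at hk ⊢
    linear_combination (-(-1:ℤ)^j * (2*(j:ℤ) + 1 - 2*(n:ℤ))) * hk
  have hend := key_choose (2*n) n (by omega)
  calc ∑ j ∈ Finset.range (n+1),
        2 * (2*(n:ℤ) - 1) * (-1:ℤ)^j * ((n:ℤ) - j) * (Nat.choose (2*n) j : ℤ)
      = ∑ j ∈ Finset.range (n+1),
          ((-1:ℤ)^(j+1) * ((j:ℤ)+1) * (2*((j:ℤ)+1) - 2*(n:ℤ) - 1) * (Nat.choose (2*n) (j+1) : ℤ)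
            - (-1:ℤ)^j * (j:ℤ) * (2*(j:ℤ) - 2*(n:ℤ) - 1) * (Nat.choose (2*n) j : ℤ)) :=
        (Finset.sum_congr rfl hpt).symm
    _ = (-1:ℤ)^(n+1) * ((n:ℤ)+1) * (2*((n:ℤ)+1) - 2*(n:ℤ) - 1) * (Nat.choose (2*n) (n+1) : ℤ) - 0 := by
        have := tel; push_cast at this ⊢; linear_combination this
    _ = (-1:ℤ)^(n+1) * (n:ℤ) * (Nat.choose (2*n) n : ℤ) := by
        push_cast at hend ⊢; linear_combination ((-1:ℤ)^(n+1)) * hend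

/-- For every natural number `n`,
`2·(2n − 1) · ∑_{0 ≤ i ≤ n, i even} i · C(2n, n−i) = C(2n, n) · (n² − n)`,
as an identity of integers. -/
theorem stmt_1 (n : ℕ) :
    2 * (2 * (n : ℤ) - 1) *
        (∑ i ∈ (Finset.range (n + 1)).filter (fun i => Even i),
          (i : ℤ) * (Nat.choose (2 * n) (n - i) : ℤ))
      = (Nat.choose (2 * n) n : ℤ) * ((n : ℤ) ^ 2 - (n : ℤ)) := by
  set E := ∑ i ∈ (Finset.range (n + 1)).filter (fun i => Even i),
      (i : ℤ) * (Nat.choose (2 * n) (n - i) : ℤ) with hE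
  -- remove the parity filter
  have h2E : 2 * E = ∑ i ∈ Finset.range (n+1),
      (1 + (-1:ℤ)^i) * ((i:ℤ) * (Nat.choose (2*n) (n-i) : ℤ)) := by
    rw [hE, Finset.sum_filter, Finset.mul_sum]
    refine Finset.sum_congr rfl fun i _ => ?_
    rcases Nat.even_or_odd i with h | h
    · rw [if_pos h, h.neg_one_pow]; ring
    · rw [if_neg (Nat.not_even_iff_odd.mpr h), h.neg_one_pow]; ring
  -- reflect the index i ↦ n - j
  have h3 : 2 * E = ∑ j ∈ Finset.range (n+1),
      (1 + (-1:ℤ)^n * (-1:ℤ)^j) * (((n:ℤ) - j) * (Nat.choose (2*n) j : ℤ)) := by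
    rw [h2E, ← Finset.sum_range_reflect]
    refine Finset.sum_congr rfl fun j hj => ?_
    have hj' : j ≤ n := by have := Finset.mem_range.mp hj; omega
    have e1 : n + 1 - 1 - j = n - j := by omega
    have e2 : n - (n - j) = j := by omega
    have e3 : ((n - j : ℕ) : ℤ) = (n:ℤ) - j := by push_cast [Nat.cast_sub hj']; ring
    have e4 : (-1:ℤ)^(n - j) = (-1:ℤ)^n * (-1:ℤ)^j := by
      have hx : (-1:ℤ)^(n-j) * (-1:ℤ)^j = (-1:ℤ)^n := by
        rw [← pow_add]; congr 1; omega
      have hy : (-1:ℤ)^j * (-1:ℤ)^j = 1 := by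
        rw [← pow_add]; exact Even.neg_one_pow ⟨j, by ring⟩
      calc (-1:ℤ)^(n-j) = (-1:ℤ)^(n-j) * ((-1:ℤ)^j * (-1:ℤ)^j) := by rw [hy, mul_one]
        _ = (-1:ℤ)^n * (-1:ℤ)^j := by rw [← mul_assoc, hx]
    rw [e1, e2, e3, e4]
  -- split the sum
  set Sa := ∑ j ∈ Finset.range (n+1), ((n:ℤ) - j) * (Nat.choose (2*n) j : ℤ) with hSa
  set Sb := ∑ j ∈ Finset.range (n+1), (-1:ℤ)^j * (((n:ℤ) - j) * (Nat.choose (2*n) j : ℤ)) with hSb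
  have h4 : 2 * E = Sa + (-1:ℤ)^n * Sb := by
    rw [h3, hSa, hSb, Finset.mul_sum, ← Finset.sum_add_distrib]
    refine Finset.sum_congr rfl fun j _ => ?_
    ring
  have h1' : 2 * Sa = (n:ℤ) * (Nat.choose (2*n) n : ℤ) := by
    rw [hSa, Finset.mul_sum, ← sumA n]
    exact Finset.sum_congr rfl fun j _ => by ring
  have h2' : 2 * (2*(n:ℤ) - 1) * Sb = (-1:ℤ)^(n+1) * (n:ℤ) * (Nat.choose (2*n) n : ℤ) := by
    rw [hSb, Finset.mul_sum, ← sumB n]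
    exact Finset.sum_congr rfl fun j _ => by ring
  have ht2 : (-1:ℤ)^n * (-1:ℤ)^n = 1 := by
    rw [← pow_add]
    exact Even.neg_one_pow ⟨n, by ring⟩
  have hfinal : (2:ℤ) * (2 * (2*(n:ℤ) - 1) * E)
      = 2 * ((Nat.choose (2*n) n : ℤ) * ((n:ℤ)^2 - (n:ℤ))) := by
    linear_combination 2*(2*(n:ℤ)-1)*h4 + (2*(n:ℤ)-1)*h1' + (-1:ℤ)^n*h2'
      - (n:ℤ)*(Nat.choose (2*n) n : ℤ)*ht2
  exact mul_left_cancel₀ two_ne_zero hfinal
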